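/- Let f: ℝ² → ℝ² be a C¹ diffeomorphism. If the Jacobian of f is diagonal at every point (∂f₁/∂c₂ ≡ 0 and ∂f₂/∂c₁ ≡ 0), and Z = f(C) where C has a non-factorizing continuous positive density, then the density of Z does not factorize either. -/

import Mathlib

open MeasureTheory Function

lemma det_two (L : (ℝ × ℝ) →L[ℝ] (ℝ × ℝ)) :
    L.det = (L (1, 0)).1 * (L (0, 1)).2 - (L (0, 1)).1 * (L (1, 0)).2 := by
  have : L.det = Matrix.det (LinearMap.toMatrix (Module.Basis.finTwoProd ℝ) (Module.Basis.finTwoProd ℝ) L) :=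
    (LinearMap.det_toMatrix _ _).symm
  rw [this, Matrix.det_fin_two]
  simp [LinearMap.toMatrix_apply]

lemma clm_det_comp (A B : (ℝ × ℝ) →L[ℝ] (ℝ × ℝ)) : (A ∘L B).det = A.det * B.det := by
  simp only [ContinuousLinearMap.det, ContinuousLinearMap.coe_comp, LinearMap.det_comp]
  exact LinearMap.det_comp (A : (ℝ × ℝ) →ₗ[ℝ] (ℝ × ℝ)) (B : (ℝ × ℝ) →ₗ[ℝ] (ℝ × ℝ))

lemma const_dir (F : ℝ × ℝ → ℝ × ℝ) (hF : Differentiable ℝ F)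
    (hd : ∀ c : ℝ × ℝ, (fderiv ℝ F c (0, 1)).1 = 0) (a b b' : ℝ) :
    (F (a, b)).1 = (F (a, b')).1 := by
  have key : ∀ t : ℝ, HasDerivAt (fun t : ℝ => (F (a, t)).1) 0 t := by
    intro t
    have hγ : HasDerivAt (fun t : ℝ => ((a : ℝ), t)) ((0 : ℝ), (1 : ℝ)) t :=
      (hasDerivAt_const t a).prodMk (hasDerivAt_id t)
    have h1 : HasDerivAt (fun t : ℝ => F (a, t)) (fderiv ℝ F (a, t) (0, 1)) t :=
      (hF (a, t)).hasFDerivAt.comp_hasDerivAt t hγ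
    have h2 := (ContinuousLinearMap.fst ℝ ℝ ℝ).hasFDerivAt.comp_hasDerivAt t h1
    simpa [hd (a, t), Function.comp_def] using h2
  exact is_const_of_deriv_eq_zero (f := fun t : ℝ => (F (a, t)).1)
    (fun t => (key t).differentiableAt) (fun t => (key t).deriv) b b'

lemma const_dir₂ (F : ℝ × ℝ → ℝ × ℝ) (hF : Differentiable ℝ F)
    (hd : ∀ c : ℝ × ℝ, (fderiv ℝ F c (1, 0)).2 = 0) (a b b' : ℝ) :
    (F (b, a)).2 = (F (b', a)).2 := by
  have key : ∀ t : ℝ, HasDerivAt (fun t : ℝ => (F (t, a)).2) 0 t := by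
    intro t
    have hγ : HasDerivAt (fun t : ℝ => (t, (a : ℝ))) ((1 : ℝ), (0 : ℝ)) t :=
      (hasDerivAt_id t).prodMk (hasDerivAt_const t a)
    have h1 : HasDerivAt (fun t : ℝ => F (t, a)) (fderiv ℝ F (t, a) (1, 0)) t :=
      (hF (t, a)).hasFDerivAt.comp_hasDerivAt t hγ
    have h2 := (ContinuousLinearMap.snd ℝ ℝ ℝ).hasFDerivAt.comp_hasDerivAt t h1
    simpa [hd (t, a), Function.comp_def] using h2
  exact is_const_of_deriv_eq_zero (f := fun t : ℝ => (F (t, a)).2)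
    (fun t => (key t).differentiableAt) (fun t => (key t).deriv) b b'

/-- let `f : ℝ² → ℝ²` be a C¹ diffeomorphism with everywhere-diagonal
Jacobian (`∂f₁/∂c₂ ≡ 0` and `∂f₂/∂c₁ ≡ 0`), and let `Z = f(C)` where `C` has a continuous,
strictly positive density `pC` that does not factorize. Then the density of `Z`, obtained
via the change-of-variables formula, does not factorize either. -/
theorem image_density_not_factorized
    (f : ℝ × ℝ → ℝ × ℝ)
    (hf : ContDiff ℝ 1 f) (hbij : Function.Bijective f)
    (hinv : ContDiff ℝ 1 (Function.invFun f))
    (hdiag₁ : ∀ c : ℝ × ℝ, (fderiv ℝ f c (0, 1)).1 = 0)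
    (hdiag₂ : ∀ c : ℝ × ℝ, (fderiv ℝ f c (1, 0)).2 = 0)
    (pC pZ : ℝ × ℝ → ℝ)
    (hpC_cont : Continuous pC) (hpC_pos : ∀ c, 0 < pC c)
    (hchange : ∀ z : ℝ × ℝ,
      pZ z = pC (Function.invFun f z) * |(fderiv ℝ (Function.invFun f) z).det|)
    (hnofact : ¬ ∃ q₁ q₂ : ℝ → ℝ, ∀ᵐ c : ℝ × ℝ ∂volume, pC c = q₁ c.1 * q₂ c.2) :
    ¬ ∃ q₁ q₂ : ℝ → ℝ, ∀ᵐ z : ℝ × ℝ ∂volume, pZ z = q₁ z.1 * q₂ z.2 := by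
  rintro ⟨q₁, q₂, hq⟩
  set h : ℝ × ℝ → ℝ × ℝ := Function.invFun f with hh
  have hfd : Differentiable ℝ f := hf.differentiable one_ne_zero
  have hhd : Differentiable ℝ h := hinv.differentiable one_ne_zero
  have hleft : Function.LeftInverse h f := Function.leftInverse_invFun hbij.1
  have hright : Function.RightInverse h f := Function.rightInverse_invFun hbij.2
  set g₁ : ℝ → ℝ := fun x => (f (x, 0)).1 with hg₁
  set g₂ : ℝ → ℝ := fun y => (f (0, y)).2 with hg₂
  have hsplit : ∀ c : ℝ × ℝ, f c = (g₁ c.1, g₂ c.2) := by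
    intro c
    have h1 : (f (c.1, c.2)).1 = (f (c.1, 0)).1 := const_dir f hfd hdiag₁ c.1 c.2 0
    have h2 : (f (c.1, c.2)).2 = (f (0, c.2)).2 := const_dir₂ f hfd hdiag₂ c.2 c.1 0
    exact Prod.ext (by simpa using h1) (by simpa using h2)
  have hsurj₁ : Function.Surjective g₁ := by
    intro y
    obtain ⟨c, hc⟩ := hbij.2 (y, 0)
    exact ⟨c.1, by have := hsplit c; rw [hc] at this; exact (congrArg Prod.fst this).symm⟩
  have hsurj₂ : Function.Surjective g₂ := by
    intro y
    obtain ⟨c, hc⟩ := hbij.2 (0, y)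
    exact ⟨c.2, by have := hsplit c; rw [hc] at this; exact (congrArg Prod.snd this).symm⟩
  set h₁ : ℝ → ℝ := Function.invFun g₁ with hh₁
  set h₂ : ℝ → ℝ := Function.invFun g₂ with hh₂
  have hhsplit : ∀ z : ℝ × ℝ, h z = (h₁ z.1, h₂ z.2) := by
    intro z
    apply hbij.1
    rw [hright z, hsplit (h₁ z.1, h₂ z.2)]
    simp only
    rw [Function.invFun_eq (hsurj₁ z.1), Function.invFun_eq (hsurj₂ z.2)]
  have hd₁ : Differentiable ℝ h₁ := by
    have : h₁ = fun x => (h (x, 0)).1 := funext fun x => by rw [hhsplit (x, 0)]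
    rw [this]
    exact (hhd.comp (differentiable_id.prodMk (differentiable_const 0))).fst
  have hd₂ : Differentiable ℝ h₂ := by
    have : h₂ = fun y => (h (0, y)).2 := funext fun y => by rw [hhsplit (0, y)]
    rw [this]
    exact (hhd.comp ((differentiable_const 0).prodMk differentiable_id)).snd
  have hDh : ∀ z : ℝ × ℝ,
      fderiv ℝ h z = (fderiv ℝ h₁ z.1).prodMap (fderiv ℝ h₂ z.2) := by
    intro z
    have hmap : h = Prod.map h₁ h₂ := funext fun z => hhsplit z
    have := HasFDerivAt.prodMap z (hd₁ z.1).hasFDerivAt (hd₂ z.2).hasFDerivAt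
    rw [hmap]
    exact this.fderiv
  have hdet : ∀ z : ℝ × ℝ,
      (fderiv ℝ h z).det = fderiv ℝ h₁ z.1 1 * fderiv ℝ h₂ z.2 1 := by
    intro z
    rw [hDh z, det_two]
    simp
  have hdetne : ∀ z : ℝ × ℝ, (fderiv ℝ h z).det ≠ 0 := by
    intro z
    have hid : h ∘ f = id := funext hleft
    have hcomp : fderiv ℝ (h ∘ f) (h z) =
        (fderiv ℝ h (f (h z))).comp (fderiv ℝ f (h z)) :=
      fderiv_comp (h z) (hhd (f (h z))) (hfd (h z))
    rw [hid, hright z, fderiv_id] at hcomp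
    have := congrArg ContinuousLinearMap.det hcomp
    rw [clm_det_comp] at this
    have hone : (ContinuousLinearMap.id ℝ (ℝ × ℝ)).det = 1 := by
      simp [ContinuousLinearMap.det]
    rw [hone] at this
    intro h0
    rw [h0] at this
    simp at this
  -- transfer a.e. statement along f
  set N : Set (ℝ × ℝ) := {z | ¬ pZ z = q₁ z.1 * q₂ z.2} with hN
  have hNnull : volume N = 0 := ae_iff.mp hq
  have himg : volume (h '' N) = 0 :=
    addHaar_image_eq_zero_of_differentiableOn_of_addHaar_eq_zero (μ := volume)
      hhd.differentiableOn hNnull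
  have hsub : f ⁻¹' N ⊆ h '' N := fun c hc => ⟨f c, hc, hleft c⟩
  have hpre : volume (f ⁻¹' N) = 0 := measure_mono_null hsub himg
  have hae : ∀ᵐ c : ℝ × ℝ ∂volume, pZ (f c) = q₁ (f c).1 * q₂ (f c).2 := by
    rw [MeasureTheory.ae_iff]
    exact hpre
  refine hnofact ⟨fun x => q₁ (g₁ x) * |deriv h₁ (g₁ x)|⁻¹,
    fun y => q₂ (g₂ y) * |deriv h₂ (g₂ y)|⁻¹, ?_⟩
  filter_upwards [hae] with c hc
  have hz := hchange (f c)
  rw [hleft c] at hz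
  have hd := hdet (f c)
  have hne := hdetne (f c)
  rw [hd] at hne
  have hne₁ : fderiv ℝ h₁ (f c).1 1 ≠ 0 := fun h0 => hne (by rw [h0]; ring)
  have hne₂ : fderiv ℝ h₂ (f c).2 1 ≠ 0 := fun h0 => hne (by rw [h0]; ring)
  rw [hd, abs_mul] at hz
  rw [hz] at hc
  have hc1 : (f c).1 = g₁ c.1 := by rw [hsplit c]
  have hc2 : (f c).2 = g₂ c.2 := by rw [hsplit c]
  simp only [hc1, hc2] at hc hne₁ hne₂
  simp only [fderiv_apply_one_eq_deriv] at hc hne₁ hne₂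
  have ha₁ : |deriv h₁ (g₁ c.1)| ≠ 0 := abs_ne_zero.mpr hne₁
  have ha₂ : |deriv h₂ (g₂ c.2)| ≠ 0 := abs_ne_zero.mpr hne₂
  field_simp
  linarith [hc]
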